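/- Let (Y₁, Y₂) be a centered bivariate Gaussian with unit variances and correlation σ ∈ [-1,1]. Then P(sign(Y₁) ≠ sign(Y₂)) = arccos(σ)/π. -/

import Mathlib

open Real MeasureTheory ProbabilityTheory

section Aux

open Set Filter

private lemma aux6_cosPos {x : ℝ} (h1 : -(2*π) < x) (h2 : x < π) :
    0 < Real.cos x ↔ (x < -(3*π/2) ∨ (-(π/2) < x ∧ x < π/2)) := by
  have hπ := Real.pi_pos
  constructor
  · intro h
    by_contra hc
    push_neg at hc
    obtain ⟨hA, hB⟩ := hc
    rcases le_or_gt x (-(π/2)) with hx | hx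
    · have : Real.cos x ≤ 0 := by
        rw [← Real.cos_neg]
        exact Real.cos_nonpos_of_pi_div_two_le_of_le (by linarith) (by linarith)
      linarith
    · have hx2 : π/2 ≤ x := by rcases hB hx with h'; linarith
      have : Real.cos x ≤ 0 :=
        Real.cos_nonpos_of_pi_div_two_le_of_le hx2 (by linarith)
      linarith
  · rintro (h | ⟨h1', h2'⟩)
    · have : Real.cos x = Real.cos (x + 2*π) := by
        rw [Real.cos_add_two_pi]
      rw [this]
      apply Real.cos_pos_of_mem_Ioo
      constructor <;> [linarith; linarith]
    · exact Real.cos_pos_of_mem_Ioo ⟨h1', h2'⟩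

private lemma aux6_cosNeg {x : ℝ} (h1 : -(2*π) < x) (h2 : x < π) :
    Real.cos x < 0 ↔ ((-(3*π/2) < x ∧ x < -(π/2)) ∨ π/2 < x) := by
  have hπ := Real.pi_pos
  constructor
  · intro h
    by_contra hc
    push_neg at hc
    obtain ⟨hA, hB⟩ := hc
    rcases le_or_gt x (-(3*π/2)) with hx | hx
    · have : Real.cos x = Real.cos (x + 2*π) := by rw [Real.cos_add_two_pi]
      have : 0 ≤ Real.cos x := by
        rw [this]
        exact Real.cos_nonneg_of_mem_Icc ⟨by linarith, by linarith⟩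
      linarith
    · have hx2 : -(π/2) ≤ x := hA hx
      have : 0 ≤ Real.cos x :=
        Real.cos_nonneg_of_mem_Icc ⟨by linarith, by linarith⟩
      linarith
  · rintro (⟨h1', h2'⟩ | h)
    · rw [← Real.cos_neg]
      exact Real.cos_neg_of_pi_div_two_lt_of_lt (by linarith) (by linarith)
    · exact Real.cos_neg_of_pi_div_two_lt_of_lt h (by linarith)

private lemma aux6_setEq {θ : ℝ} (hθ0 : 0 ≤ θ) (hθπ : θ ≤ π) :
    {φ : ℝ | Real.cos φ * Real.cos (φ - θ) < 0} ∩ Ioo (-π) π =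
      Ioo (-(π/2)) (θ - π/2) ∪ Ioo (π/2) (min π (θ + π/2)) ∪ Ioo (-π) (θ - 3*π/2) := by
  have hπ := Real.pi_pos
  ext φ
  simp only [mem_inter_iff, mem_setOf_eq, mem_Ioo, mem_union, lt_min_iff]
  constructor
  · rintro ⟨hprod, hlo, hhi⟩
    have h1 : -(2*π) < φ := by linarith
    have h1' : -(2*π) < φ - θ := by linarith
    have h2' : φ - θ < π := by linarith
    rcases mul_neg_iff.1 hprod with ⟨hcp, hcn⟩ | ⟨hcn, hcp⟩
    · rcases (aux6_cosPos h1 hhi).1 hcp with h | ⟨ha, hb⟩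
      · linarith
      rcases (aux6_cosNeg h1' h2').1 hcn with ⟨hc, hd⟩ | hc
      · left; left; constructor <;> linarith
      · linarith
    · rcases (aux6_cosNeg h1 hhi).1 hcn with ⟨ha, hb⟩ | ha
      · rcases (aux6_cosPos h1' h2').1 hcp with h | ⟨hc, hd⟩
        · right; constructor <;> linarith
        · linarith
      · rcases (aux6_cosPos h1' h2').1 hcp with h | ⟨hc, hd⟩
        · linarith
        · left; right; exact ⟨ha, hhi, by linarith⟩
  · rintro ((⟨ha, hb⟩ | ⟨ha, hb, hc⟩) | ⟨ha, hb⟩)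
    · refine ⟨?_, by linarith, by linarith⟩
      have hcp : 0 < Real.cos φ :=
        (aux6_cosPos (by linarith) (by linarith)).2 (Or.inr ⟨ha, by linarith⟩)
      have hcn : Real.cos (φ - θ) < 0 :=
        (aux6_cosNeg (by linarith) (by linarith)).2 (Or.inl ⟨by linarith, by linarith⟩)
      exact mul_neg_of_pos_of_neg hcp hcn
    · refine ⟨?_, by linarith, hb⟩
      have hcn : Real.cos φ < 0 := (aux6_cosNeg (by linarith) (by linarith)).2 (Or.inr ha)
      have hcp : 0 < Real.cos (φ - θ) :=
        (aux6_cosPos (by linarith) (by linarith)).2 (Or.inr ⟨by linarith, by linarith⟩)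
      exact mul_neg_of_neg_of_pos hcn hcp
    · refine ⟨?_, ha, by linarith⟩
      have hb' : φ < -(π/2) := by linarith
      have hcn : Real.cos φ < 0 :=
        (aux6_cosNeg (by linarith) (by linarith)).2 (Or.inl ⟨by linarith, hb'⟩)
      have hcp : 0 < Real.cos (φ - θ) :=
        (aux6_cosPos (by linarith) (by linarith)).2 (Or.inl (by linarith))
      exact mul_neg_of_neg_of_pos hcn hcp

private lemma aux6_volU {θ : ℝ} (hθ0 : 0 ≤ θ) (hθπ : θ ≤ π) :
    MeasureTheory.volume
        (Ioo (-(π/2)) (θ - π/2) ∪ Ioo (π/2) (min π (θ + π/2)) ∪ Ioo (-π) (θ - 3*π/2) : Set ℝ)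
      = ENNReal.ofReal (2*θ) := by
  have hπ := Real.pi_pos
  rw [MeasureTheory.measure_union _ measurableSet_Ioo,
      MeasureTheory.measure_union _ measurableSet_Ioo]
  · rw [Real.volume_Ioo, Real.volume_Ioo, Real.volume_Ioo]
    rcases le_or_gt θ (π/2) with h | h
    · rw [min_eq_right (by linarith)]
      rw [ENNReal.ofReal_eq_zero.2 (by linarith : θ - 3*π/2 - -π ≤ 0), add_zero,
        ← ENNReal.ofReal_add (by linarith) (by linarith)]
      ring_nf
    · rw [min_eq_left (by linarith)]
      rw [← ENNReal.ofReal_add (by linarith) (by linarith),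
        ← ENNReal.ofReal_add (by linarith) (by linarith)]
      ring_nf
  · rw [Set.disjoint_right]
    rintro x ⟨hx1, hx2⟩ ⟨hy1, hy2⟩
    simp only [mem_Ioo, lt_min_iff] at *
    linarith [hy2]
  · rw [Set.disjoint_left]
    rintro x (⟨hx1, hx2⟩ | ⟨hx1, hx2⟩) ⟨hy1, hy2⟩ <;> linarith

private lemma aux6_cos_zero_null : volume {x : ℝ | Real.cos x = 0} = 0 := by
  have : {x : ℝ | Real.cos x = 0} ⊆ Set.range (fun k : ℤ => (2 * (k:ℝ) + 1) * π / 2) := by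
    intro x hx
    obtain ⟨k, hk⟩ := Real.cos_eq_zero_iff.1 hx
    exact ⟨k, hk.symm⟩
  exact measure_mono_null this (Set.Countable.measure_zero (Set.countable_range _) _)

private lemma aux6_cos_shift_null (θ : ℝ) : volume {x : ℝ | Real.cos (x - θ) = 0} = 0 := by
  have : {x : ℝ | Real.cos (x - θ) = 0}
      ⊆ Set.range (fun k : ℤ => (2 * (k:ℝ) + 1) * π / 2 + θ) := by
    intro x hx
    obtain ⟨k, hk⟩ := Real.cos_eq_zero_iff.1 hx
    exact ⟨k, by linarith⟩
  exact measure_mono_null this (Set.Countable.measure_zero (Set.countable_range _) _)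

private lemma aux6_volS {θ : ℝ} (hθ0 : 0 ≤ θ) (hθπ : θ ≤ π) :
    volume ({φ : ℝ | (0 ≤ Real.cos φ) ≠ (0 ≤ Real.cos (φ - θ))} ∩ Ioo (-π) π)
      = ENNReal.ofReal (2*θ) := by
  have hcongr :
      volume ({φ : ℝ | (0 ≤ Real.cos φ) ≠ (0 ≤ Real.cos (φ - θ))} ∩ Ioo (-π) π) =
      volume ({φ : ℝ | Real.cos φ * Real.cos (φ - θ) < 0} ∩ Ioo (-π) π) := by
    apply measure_congr
    rw [Filter.eventuallyEq_set]
    have hz : ∀ᵐ x : ℝ, Real.cos x ≠ 0 ∧ Real.cos (x - θ) ≠ 0 := by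
      rw [MeasureTheory.ae_iff]
      refine measure_mono_null (fun x hx => ?_)
        (measure_union_null aux6_cos_zero_null (aux6_cos_shift_null θ))
      simp only [mem_setOf_eq, not_and_or, not_not] at hx
      exact hx
    filter_upwards [hz] with x ⟨h1, h2⟩
    simp only [mem_inter_iff, mem_setOf_eq, and_congr_left_iff]
    intro _
    rcases h1.lt_or_gt with ha | ha <;> rcases h2.lt_or_gt with hb | hb
    · simp [not_le.2 ha, not_le.2 hb, not_lt.2 (le_of_lt (mul_pos_of_neg_of_neg ha hb))]
    · simp [not_le.2 ha, hb.le, mul_neg_of_neg_of_pos ha hb]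
    · simp [ha.le, not_le.2 hb, mul_neg_of_pos_of_neg ha hb]
    · simp [ha.le, hb.le, not_lt.2 (le_of_lt (mul_pos ha hb))]
  rw [hcongr, aux6_setEq hθ0 hθπ, aux6_volU hθ0 hθπ]

private lemma aux6_radial_integral : ∫ r in Ioi (0:ℝ), r * Real.exp (-(r^2/2)) = 1 := by
  have A : ∀ x : ℝ, HasDerivAt (fun y : ℝ => -Real.exp (-(y^2/2)))
      (x * Real.exp (-(x^2/2))) x := by
    intro x
    have h1 : HasDerivAt (fun y : ℝ => -(y^2/2)) (-x) x := by
      have := (hasDerivAt_pow 2 x).div_const 2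
      simpa using this.fun_neg
    have := (h1.exp).fun_neg
    exact this.congr_deriv (by ring)
  have hInt : IntegrableOn (fun r : ℝ => r * Real.exp (-(r^2/2))) (Ioi 0) := by
    have := (integrable_mul_exp_neg_mul_sq (b := 1/2) (by norm_num)).integrableOn (s := Ioi 0)
    convert this using 2 with r
    ring_nf
  have B : Tendsto (fun y : ℝ => -Real.exp (-(y^2/2))) atTop (nhds 0) := by
    rw [show (0:ℝ) = -0 by ring]
    apply Tendsto.neg
    apply Real.tendsto_exp_atBot.comp
    have h2 : Tendsto (fun y : ℝ => y^2/2) atTop atTop :=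
      (tendsto_pow_atTop two_ne_zero).atTop_div_const (by norm_num)
    simpa using tendsto_neg_atBot_iff.2 h2
  have := integral_Ioi_of_hasDerivAt_of_tendsto' (fun x _ => A x) hInt B
  rw [this]; simp

private lemma aux6_measSet {α : Type*} [MeasurableSpace α] {f g : α → ℝ}
    (hf : Measurable f) (hg : Measurable g) :
    MeasurableSet {a | (0 ≤ f a) ≠ (0 ≤ g a)} := by
  have : {a | (0 ≤ f a) ≠ (0 ≤ g a)} =
      (f ⁻¹' Ici 0 ∩ (g ⁻¹' Ici 0)ᶜ) ∪ ((f ⁻¹' Ici 0)ᶜ ∩ g ⁻¹' Ici 0) := by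
    ext a
    by_cases h1 : 0 ≤ f a <;> by_cases h2 : 0 ≤ g a <;> simp [h1, h2]
  rw [this]
  exact ((hf measurableSet_Ici).inter (hg measurableSet_Ici).compl).union
    ((hf measurableSet_Ici).compl.inter (hg measurableSet_Ici))

private lemma aux6_main2d {θ : ℝ} (hθ0 : 0 ≤ θ) (hθπ : θ ≤ π) :
    ((gaussianReal 0 1).prod (gaussianReal 0 1))
      {p : ℝ × ℝ | (0 ≤ p.1) ≠ (0 ≤ Real.cos θ * p.1 + Real.sin θ * p.2)} =
      ENNReal.ofReal (θ / π) := by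
  have hπ := Real.pi_pos
  set f : ℝ → ℝ := gaussianPDFReal 0 1 with hf
  set E : Set (ℝ × ℝ) := {p : ℝ × ℝ | (0 ≤ p.1) ≠ (0 ≤ Real.cos θ * p.1 + Real.sin θ * p.2)}
  set S : Set ℝ := {φ : ℝ | (0 ≤ Real.cos φ) ≠ (0 ≤ Real.cos (φ - θ))}
  have hE : MeasurableSet E :=
    aux6_measSet measurable_fst ((measurable_fst.const_mul _).add (measurable_snd.const_mul _))
  have hS : MeasurableSet S :=
    aux6_measSet Real.measurable_cos (Real.measurable_cos.comp (measurable_id.sub_const θ))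
  have h1 : (gaussianReal 0 1).prod (gaussianReal 0 1) =
      (volume : Measure (ℝ × ℝ)).withDensity
        (fun p => gaussianPDF 0 1 p.1 * gaussianPDF 0 1 p.2) := by
    refine Measure.prod_eq fun s t hs ht => ?_
    rw [withDensity_apply _ (hs.prod ht), Measure.volume_eq_prod, ← Measure.prod_restrict,
      lintegral_prod_mul (measurable_gaussianPDF 0 1).aemeasurable
        (measurable_gaussianPDF 0 1).aemeasurable,
      ← withDensity_apply _ hs, ← withDensity_apply _ ht,
      ← gaussianReal_of_var_ne_zero 0 one_ne_zero]
  rw [h1, withDensity_apply _ hE]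
  have hInt : Integrable (fun p : ℝ × ℝ => f p.1 * f p.2) := by
    rw [Measure.volume_eq_prod]
    exact (integrable_gaussianPDFReal 0 1).mul_prod (integrable_gaussianPDFReal 0 1)
  have h2 : ∫⁻ p in E, gaussianPDF 0 1 p.1 * gaussianPDF 0 1 p.2 =
      ENNReal.ofReal (∫ p in E, f p.1 * f p.2) := by
    rw [ofReal_integral_eq_lintegral_ofReal (hInt.integrableOn)
      (ae_of_all _ fun p =>
        mul_nonneg (gaussianPDFReal_nonneg 0 1 _) (gaussianPDFReal_nonneg 0 1 _))]
    congr 1 with p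
    exact (ENNReal.ofReal_mul (gaussianPDFReal_nonneg 0 1 _)).symm
  rw [h2]
  congr 1
  rw [← integral_indicator hE,
    ← integral_comp_polarCoord_symm (E.indicator fun p => f p.1 * f p.2)]
  have htarget : polarCoord.target = Ioi (0:ℝ) ×ˢ Ioo (-π) π := rfl
  have h3 : ∀ p ∈ polarCoord.target,
      p.1 • (E.indicator (fun p => f p.1 * f p.2)) (polarCoord.symm p) =
        (p.1 * Real.exp (-(p.1^2/2))) * (S.indicator (fun _ => (2*π)⁻¹) p.2) := by
    rintro ⟨r, φ⟩ hp
    rw [htarget] at hp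
    obtain ⟨hr, hφ⟩ := hp
    simp only [mem_Ioi] at hr
    have hsymm : polarCoord.symm (r, φ) = (r * Real.cos φ, r * Real.sin φ) := rfl
    rw [hsymm]
    have hmem : (r * Real.cos φ, r * Real.sin φ) ∈ E ↔ φ ∈ S := by
      simp only [E, S, mem_setOf_eq]
      have e1 : (0 ≤ r * Real.cos φ) = (0 ≤ Real.cos φ) := by
        rw [eq_iff_iff]; exact mul_nonneg_iff_of_pos_left hr
      have e2 : Real.cos θ * (r * Real.cos φ) + Real.sin θ * (r * Real.sin φ)
          = r * Real.cos (φ - θ) := by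
        rw [Real.cos_sub]; ring
      have e3 : (0 ≤ r * Real.cos (φ - θ)) = (0 ≤ Real.cos (φ - θ)) := by
        rw [eq_iff_iff]; exact mul_nonneg_iff_of_pos_left hr
      rw [e1, e2, e3]
    have hval : f (r * Real.cos φ) * f (r * Real.sin φ)
        = (2*π)⁻¹ * Real.exp (-(r^2/2)) := by
      simp only [hf, gaussianPDFReal, NNReal.coe_one, mul_one, sub_zero]
      rw [show ∀ a b c d : ℝ, (a * b) * (c * d) = (a * c) * (b * d) by intros; ring,
        ← Real.exp_add, ← mul_inv, Real.mul_self_sqrt (by positivity : (0:ℝ) ≤ 2*π)]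
      congr 1
      have := Real.sin_sq_add_cos_sq φ
      field_simp
      congr 1
      nlinarith [Real.sin_sq_add_cos_sq φ]
    by_cases hφS : φ ∈ S
    · rw [Set.indicator_of_mem (hmem.2 hφS), Set.indicator_of_mem hφS, hval]
      simp only [smul_eq_mul]; ring
    · rw [Set.indicator_of_notMem (fun h => hφS (hmem.1 h)), Set.indicator_of_notMem hφS]
      simp
  rw [setIntegral_congr_fun polarCoord.open_target.measurableSet h3, htarget,
    Measure.volume_eq_prod]
  rw [setIntegral_prod_mul (μ := (volume : Measure ℝ)) (ν := (volume : Measure ℝ))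
    (fun r : ℝ => r * Real.exp (-(r^2/2))) (fun φ : ℝ => S.indicator (fun _ => (2*π)⁻¹) φ)
    (Ioi 0) (Ioo (-π) π), aux6_radial_integral, one_mul]
  rw [integral_indicator hS, Measure.restrict_restrict hS, setIntegral_const, measureReal_def,
    aux6_volS hθ0 hθπ, smul_eq_mul]
  rw [ENNReal.toReal_ofReal (by linarith)]
  field_simp

end Aux

/-- With `Y₁ = X₁`, `Y₂ = σ X₁ + √(1-σ²) X₂` a centered bivariate Gaussian with unit
variances and correlation `σ ∈ [-1,1]`, the probability that `sign Y₁ ≠ sign Y₂` equals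
`arccos σ / π`. -/
theorem stmt_6 (Ω : Type*) [MeasureSpace Ω] [IsProbabilityMeasure (ℙ : Measure Ω)]
    (X₁ X₂ : Ω → ℝ) (hm1 : Measurable X₁) (hm2 : Measurable X₂)
    (hindep : IndepFun X₁ X₂ ℙ)
    (h1 : Measure.map X₁ ℙ = gaussianReal 0 1)
    (h2 : Measure.map X₂ ℙ = gaussianReal 0 1)
    (σ : ℝ) (hσ : σ ∈ Set.Icc (-1 : ℝ) 1)
    (sgn : ℝ → ℝ) (hsgn : ∀ y : ℝ, sgn y = if 0 ≤ y then 1 else -1) :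
    ℙ {ω | sgn (X₁ ω) ≠ sgn (σ * X₁ ω + Real.sqrt (1 - σ ^ 2) * X₂ ω)} =
      ENNReal.ofReal (arccos σ / π) := by
  obtain ⟨hσ1, hσ2⟩ := hσ
  set θ : ℝ := Real.arccos σ with hθ
  have hθ0 : 0 ≤ θ := Real.arccos_nonneg σ
  have hθπ : θ ≤ π := Real.arccos_le_pi σ
  have hcos : Real.cos θ = σ := Real.cos_arccos hσ1 hσ2
  have hsin : Real.sin θ = Real.sqrt (1 - σ ^ 2) := Real.sin_arccos σ
  set E : Set (ℝ × ℝ) := {p : ℝ × ℝ | (0 ≤ p.1) ≠ (0 ≤ Real.cos θ * p.1 + Real.sin θ * p.2)}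
  have hE : MeasurableSet E :=
    aux6_measSet measurable_fst ((measurable_fst.const_mul _).add (measurable_snd.const_mul _))
  have hsgn_iff : ∀ a b : ℝ, (sgn a ≠ sgn b) ↔ ((0 ≤ a) ≠ (0 ≤ b)) := by
    intro a b
    rw [hsgn a, hsgn b]
    by_cases ha : 0 ≤ a <;> by_cases hb : 0 ≤ b <;> simp [ha, hb] <;> norm_num
  have hset : {ω | sgn (X₁ ω) ≠ sgn (σ * X₁ ω + Real.sqrt (1 - σ ^ 2) * X₂ ω)} =
      (fun ω => (X₁ ω, X₂ ω)) ⁻¹' E := by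
    ext ω
    simp only [Set.mem_setOf_eq, Set.mem_preimage, E, hcos, hsin]
    exact hsgn_iff _ _
  rw [hset, ← Measure.map_apply (hm1.prodMk hm2) hE,
    (ProbabilityTheory.indepFun_iff_map_prod_eq_prod_map_map hm1.aemeasurable
      hm2.aemeasurable).1 hindep, h1, h2]
  exact aux6_main2d hθ0 hθπ
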